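/- For all real numbers a > 0 and k > 0, ∫_ℝ e^{2πiku}/(u − ia)² du = −4π²k e^{−2πka}, where the integral is taken over the real line with respect to Lebesgue measure and i is the imaginary unit. -/

import Mathlib

open MeasureTheory Real Set Filter FourierTransform

lemma aux_norm_exp_neg (c : ℂ) (t : ℝ) :
    ‖Complex.exp (-(c * t))‖ = Real.exp (-c.re * t) := by
  rw [Complex.norm_exp, Complex.neg_re, Complex.mul_re]
  simp [neg_mul]

lemma aux_integrableOn (c : ℂ) (hc : 0 < c.re) :
    IntegrableOn (fun t : ℝ => (t : ℂ) * Complex.exp (-(c * t))) (Set.Ioi 0) := by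
  have h0 : IntegrableOn (fun x : ℝ => x ^ (1 : ℝ) * Real.exp (-c.re * x ^ (1 : ℝ)))
      (Set.Ioi 0) := integrableOn_rpow_mul_exp_neg_mul_rpow (by norm_num) one_pos hc
  have h1 : IntegrableOn (fun x : ℝ => x * Real.exp (-c.re * x)) (Set.Ioi 0) := by
    refine h0.congr_fun (fun x hx => ?_) measurableSet_Ioi
    simp only [Real.rpow_one]
  refine Integrable.mono' h1 ?_ ?_
  · exact (Complex.continuous_ofReal.mul
      (Complex.continuous_exp.comp (by continuity))).aestronglyMeasurable
  · filter_upwards [ae_restrict_mem measurableSet_Ioi] with t ht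
    rw [norm_mul, aux_norm_exp_neg, Complex.norm_real, Real.norm_eq_abs,
      abs_of_pos (Set.mem_Ioi.mp ht)]

lemma aux_integral (c : ℂ) (hc : 0 < c.re) :
    ∫ t in Set.Ioi (0 : ℝ), (t : ℂ) * Complex.exp (-(c * t)) = 1 / c ^ 2 := by
  have hc0 : c ≠ 0 := by
    intro h; rw [h] at hc; simp at hc
  set F : ℝ → ℂ := fun t => -(((t : ℂ) + 1 / c) / c) * Complex.exp (-(c * t)) with hF
  have hderiv : ∀ t : ℝ, HasDerivAt F ((t : ℂ) * Complex.exp (-(c * t))) t := by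
    intro t
    have hE : ∀ z : ℂ, HasDerivAt (fun z : ℂ => -((z + 1 / c) / c) * Complex.exp (-(c * z)))
        (z * Complex.exp (-(c * z))) z := by
      intro z
      have h1 : HasDerivAt (fun z : ℂ => -((z + 1 / c) / c)) (-(1 / c)) z := by
        simpa using (((hasDerivAt_id z).add_const (1 / c)).div_const c).fun_neg
      have h2 : HasDerivAt (fun z : ℂ => Complex.exp (-(c * z)))
          (-c * Complex.exp (-(c * z))) z := by
        have := (Complex.hasDerivAt_exp (-(c * z))).comp z
          (((hasDerivAt_id z).const_mul c).fun_neg)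
        simpa [mul_comm, Function.comp_def] using this
      have := h1.fun_mul h2
      refine this.congr_deriv ?_
      field_simp
      ring
    have := (hE t).comp_ofReal
    simpa [hF] using this
  have htend : Tendsto F atTop (nhds 0) := by
    apply squeeze_zero_norm' (a := fun t : ℝ =>
      ((t * Real.exp (-c.re * t)) + ‖(1 : ℂ) / c‖ * Real.exp (-c.re * t)) * ‖c‖⁻¹)
    · filter_upwards [eventually_ge_atTop (0 : ℝ)] with t ht
      have hFt : ‖F t‖ = ‖(t : ℂ) + 1 / c‖ * ‖c‖⁻¹ * Real.exp (-c.re * t) := by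
        simp only [hF, norm_mul, norm_neg, norm_div, aux_norm_exp_neg, div_eq_mul_inv, norm_inv, norm_one, one_mul]
      rw [hFt]
      have hb : ‖(t : ℂ) + 1 / c‖ ≤ t + ‖(1 : ℂ) / c‖ := by
        refine (norm_add_le _ _).trans ?_
        gcongr
        rw [Complex.norm_real, Real.norm_eq_abs]
        exact le_of_eq (abs_of_nonneg ht)
      have he : (0 : ℝ) ≤ Real.exp (-c.re * t) := (Real.exp_pos _).le
      calc ‖(t : ℂ) + 1 / c‖ * ‖c‖⁻¹ * Real.exp (-c.re * t)
          ≤ (t + ‖(1 : ℂ) / c‖) * ‖c‖⁻¹ * Real.exp (-c.re * t) := by gcongr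
        _ = (t * Real.exp (-c.re * t) + ‖(1 : ℂ) / c‖ * Real.exp (-c.re * t)) * ‖c‖⁻¹ := by
            ring
    · have h1 : Tendsto (fun t : ℝ => t * Real.exp (-c.re * t)) atTop (nhds 0) := by
        have := tendsto_rpow_mul_exp_neg_mul_atTop_nhds_zero 1 c.re hc
        refine this.congr' ?_
        filter_upwards [eventually_gt_atTop (0 : ℝ)] with t ht
        rw [Real.rpow_one]
      have h2 : Tendsto (fun t : ℝ => Real.exp (-c.re * t)) atTop (nhds 0) := by
        apply Real.tendsto_exp_atBot.comp
        exact (tendsto_const_mul_atBot_of_neg (neg_lt_zero.mpr hc)).mpr tendsto_id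
      have := ((h1.add (h2.const_mul ‖(1 : ℂ) / c‖)).mul_const ‖c‖⁻¹)
      simpa using this
  have := integral_Ioi_of_hasDerivAt_of_tendsto
    (f := F) (f' := fun t : ℝ => (t : ℂ) * Complex.exp (-(c * t))) (a := 0)
    ((hderiv 0).continuousAt.continuousWithinAt)
    (fun x _ => hderiv x) (aux_integrableOn c hc) htend
  rw [this]
  simp only [hF, Complex.ofReal_zero, zero_add, mul_zero, neg_zero, Complex.exp_zero, mul_one]
  field_simp
  ring

/-- For all real `a > 0` and `k > 0`,
`∫_ℝ e^{2πiku} / (u - ia)² du = -4π²k e^{-2πka}`. -/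
theorem stmt7 (a k : ℝ) (ha : 0 < a) (hk : 0 < k) :
    ∫ u : ℝ, Complex.exp (2 * Real.pi * Complex.I * k * u) / ((u : ℂ) - Complex.I * a) ^ 2
      = ((-4 * Real.pi ^ 2 * k * Real.exp (-2 * Real.pi * k * a) : ℝ) : ℂ) := by
  set f : ℝ → ℂ :=
    Set.indicator (Set.Ioi 0) (fun t : ℝ => (t : ℂ) * Complex.exp (-((2 * π * a : ℂ) * t)))
    with hf
  have hre : (0 : ℝ) < (2 * π * a : ℂ).re := by
    simp only [Complex.mul_re, Complex.ofReal_re, Complex.ofReal_im, Complex.re_ofNat,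
      Complex.im_ofNat, Complex.mul_im]
    ring_nf
    positivity
  have hf_int : Integrable f :=
    (aux_integrableOn (2 * π * a : ℂ) hre).integrable_indicator measurableSet_Ioi
  have hne : ∀ u : ℝ, ((a : ℂ) + u * Complex.I) ≠ 0 := by
    intro u h
    have := congrArg Complex.re h
    simp at this
    exact ha.ne' this
  have hπC : ((π : ℝ) : ℂ) ≠ 0 := Complex.ofReal_ne_zero.mpr Real.pi_ne_zero
  have htwoπ : (2 * (π : ℂ)) ≠ 0 := mul_ne_zero two_ne_zero hπC
  have hFT : ∀ u : ℝ, 𝓕 f u = 1 / (2 * π * ((a : ℂ) + u * Complex.I)) ^ 2 := by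
    intro u
    rw [Real.fourier_real_eq_integral_exp_smul]
    have : (fun v : ℝ => Complex.exp (↑(-2 * π * v * u) * Complex.I) • f v)
        = Set.indicator (Set.Ioi 0)
          (fun v : ℝ => (v : ℂ) * Complex.exp (-((2 * π * ((a : ℂ) + u * Complex.I)) * v))) := by
      ext v
      by_cases hv : v ∈ Set.Ioi (0 : ℝ)
      · rw [hf]
        rw [Set.indicator_of_mem hv, Set.indicator_of_mem hv, smul_eq_mul]
        rw [← mul_assoc, mul_comm (Complex.exp _) ((v : ℂ)), mul_assoc, ← Complex.exp_add]
        congr 1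
        push_cast
        ring
      · rw [hf, Set.indicator_of_notMem hv, Set.indicator_of_notMem hv, smul_zero]
    rw [this, integral_indicator measurableSet_Ioi]
    refine aux_integral _ ?_
    have : (2 * (π : ℂ) * ((a : ℂ) + u * Complex.I)).re = 2 * π * a := by
      simp [Complex.mul_re, Complex.add_re, Complex.add_im, Complex.mul_im]
    rw [this]
    positivity
  have h'f : Integrable (𝓕 f) := by
    rw [funext hFT]
    have base : Integrable (fun u : ℝ => (max (a ^ 2)⁻¹ 1) * (1 + u ^ 2)⁻¹) :=
      integrable_inv_one_add_sq.const_mul _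
    refine base.mono' ?_ ?_
    · apply Continuous.aestronglyMeasurable
      apply Continuous.div continuous_const
      · fun_prop
      · intro u
        exact pow_ne_zero 2 (mul_ne_zero htwoπ (hne u))
    · refine Filter.Eventually.of_forall (fun u => ?_)
      have hau : (0 : ℝ) < a ^ 2 + u ^ 2 := by positivity
      have habs : ‖(a : ℂ) + u * Complex.I‖ ^ 2 = a ^ 2 + u ^ 2 := by
        rw [Complex.sq_norm, Complex.normSq_add_mul_I]
      have hnorm : ‖(1 : ℂ) / (2 * π * ((a : ℂ) + u * Complex.I)) ^ 2‖
          = 1 / ((2 * π) ^ 2 * (a ^ 2 + u ^ 2)) := by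
        rw [norm_div, norm_pow, norm_mul, norm_one, mul_pow]
        rw [show ‖(2 * (π : ℂ))‖ = 2 * π by
          rw [show (2 * (π : ℂ)) = ((2 * π : ℝ) : ℂ) by push_cast; ring,
            Complex.norm_real, Real.norm_eq_abs, abs_of_pos (by positivity)]]
        rw [habs]
      rw [hnorm, div_le_iff₀ (by positivity)]
      have h1 : (1 : ℝ) ≤ max (a ^ 2)⁻¹ 1 * (a ^ 2) := by
        calc (1 : ℝ) = (a ^ 2)⁻¹ * a ^ 2 := by field_simp
          _ ≤ max (a ^ 2)⁻¹ 1 * a ^ 2 := by gcongr; exact le_max_left _ _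
      have h2 : u ^ 2 ≤ max (a ^ 2)⁻¹ 1 * u ^ 2 := by
        nth_rewrite 1 [← one_mul (u ^ 2)]
        gcongr
        exact le_max_right _ _
      have hpi : (1 : ℝ) ≤ (2 * π) ^ 2 := by nlinarith [Real.pi_gt_three]
      have key1 : 1 + u ^ 2 ≤ max (a ^ 2)⁻¹ 1 * (a ^ 2 + u ^ 2) := by
        rw [mul_add]; exact add_le_add h1 h2
      have hK0 : (0 : ℝ) ≤ max (a ^ 2)⁻¹ 1 := le_trans zero_le_one (le_max_right _ _)
      calc (1 : ℝ) = (1 + u ^ 2) * (1 + u ^ 2)⁻¹ := by field_simp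
        _ ≤ (max (a ^ 2)⁻¹ 1 * ((2 * π) ^ 2 * (a ^ 2 + u ^ 2))) * (1 + u ^ 2)⁻¹ := by
            gcongr
            calc 1 + u ^ 2 ≤ max (a ^ 2)⁻¹ 1 * (a ^ 2 + u ^ 2) := key1
              _ = max (a ^ 2)⁻¹ 1 * (1 * (a ^ 2 + u ^ 2)) := by ring
              _ ≤ max (a ^ 2)⁻¹ 1 * ((2 * π) ^ 2 * (a ^ 2 + u ^ 2)) := by gcongr
        _ = max (a ^ 2)⁻¹ 1 * (1 + u ^ 2)⁻¹ * ((2 * π) ^ 2 * (a ^ 2 + u ^ 2)) := by ring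
  have hcont : ContinuousAt f k := by
    have hmem : Set.Ioi (0 : ℝ) ∈ nhds k := (isOpen_Ioi).mem_nhds hk
    have heq : f =ᶠ[nhds k] fun t : ℝ => (t : ℂ) * Complex.exp (-((2 * π * a : ℂ) * t)) := by
      filter_upwards [hmem] with t ht
      exact Set.indicator_of_mem ht _
    refine ContinuousAt.congr ?_ heq.symm
    exact (Complex.continuous_ofReal.mul
      (Complex.continuous_exp.comp (by continuity))).continuousAt
  have hinv : 𝓕⁻ (𝓕 f) k = f k := hf_int.fourierInv_fourier_eq h'f hcont
  have hLHS : 𝓕⁻ (𝓕 f) k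
      = ∫ u : ℝ, Complex.exp (↑(2 * π * u * k) * Complex.I)
          * (1 / (2 * π * ((a : ℂ) + u * Complex.I)) ^ 2) := by
    rw [Real.fourierInv_eq_fourier_neg,
      Real.fourier_real_eq_integral_exp_smul]
    congr 1
    ext u
    rw [hFT u, smul_eq_mul]
    congr 2
    push_cast
    ring
  have hmain : (∫ u : ℝ, Complex.exp (2 * Real.pi * Complex.I * k * u)
        / ((u : ℂ) - Complex.I * a) ^ 2)
      = (-4 * π ^ 2 : ℂ) * ∫ u : ℝ, Complex.exp (↑(2 * π * u * k) * Complex.I)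
          * (1 / (2 * π * ((a : ℂ) + u * Complex.I)) ^ 2) := by
    rw [← integral_const_mul]
    congr 1
    ext u
    have hsq : ((u : ℂ) - Complex.I * a) ^ 2 = -((a : ℂ) + u * Complex.I) ^ 2 := by
      have h : ((a : ℂ) + u * Complex.I) = Complex.I * ((u : ℂ) - Complex.I * a) := by
        rw [mul_sub, ← mul_assoc]
        rw [Complex.I_mul_I]
        ring
      rw [h, mul_pow, Complex.I_sq]
      ring
    have hexp : Complex.exp (2 * Real.pi * Complex.I * k * u)
        = Complex.exp (↑(2 * π * u * k) * Complex.I) := by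
      congr 1
      push_cast
      ring
    rw [hexp, hsq]
    set z : ℂ := (a : ℂ) + u * Complex.I with hzdef
    have hz : z ≠ 0 := hne u
    field_simp
    ring
  rw [hmain, ← hLHS, hinv, hf, Set.indicator_of_mem (Set.mem_Ioi.mpr hk)]
  rw [show (-((2 * (π : ℂ) * a) * k)) = ((-2 * π * k * a : ℝ) : ℂ) by push_cast; ring]
  rw [← Complex.ofReal_exp]
  push_cast
  ring
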